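/- There is an absolute constant C > 0 such that the following holds. Let δ ∈ 2^{-ℕ}, let A, B ⊆ δ·ℤ be finite nonempty sets, let B' ⊆ B be nonempty, let c ∈ ℝ, and let k ∈ ℕ. Then |A + c·(2^k B)|_δ ≤ C · (|A + A|/|A|) · (|2^{k+1}B|/|2^k B|) · (|2^k B|/|2^k B'|) · |A + c·(2^k B')|_δ, where mB denotes the m-fold sumset B + ⋯ + B. -/

import Mathlib

open MeasureTheory Metric Set Pointwise

/-- δ is a dyadic scale: δ = 2^{-j} for some j ∈ ℕ. -/
def isDyadic (δ : ℝ) : Prop := ∃ j : ℕ, δ = 2 ^ (-(j : ℤ))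

/-- The δ-grid (δ·ℤ) ∩ [0,1]. -/
def grid (δ : ℝ) : Set ℝ := {x : ℝ | (∃ k : ℤ, x = (k : ℝ) * δ) ∧ x ∈ Set.Icc (0:ℝ) 1}

/-- δ·ℤ -/
def gridZ (δ : ℝ) : Set ℝ := {x : ℝ | ∃ k : ℤ, x = (k : ℝ) * δ}

/-- Least number of dyadic intervals of length δ needed to cover X. -/
noncomputable def covN (δ : ℝ) (X : Set ℝ) : ℕ :=
  sInf {n : ℕ | ∃ s : Finset ℤ, s.card = n ∧
    X ⊆ ⋃ k ∈ s, Set.Ico ((k : ℝ) * δ) (((k : ℝ) + 1) * δ)}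

/-- Support of a measure on ℝ. -/
def sptm (ν : Measure ℝ) : Set ℝ := {x : ℝ | ∀ ε > 0, 0 < ν (Metric.ball x ε)}

/-- The projection π_c(x,y) = x + cy. -/
def piC (c : ℝ) : ℝ × ℝ → ℝ := fun p => p.1 + c * p.2

/-- The exceptional set 𝓔(A∣B,ε): those c for which some large subset B' ⊆ B has
|A + cB'|_δ < δ^{-ε}|A|. -/
noncomputable def Eexc (δ ε : ℝ) (A B : Set ℝ) : Set ℝ :=
  {c : ℝ | ∃ B' ⊆ B, δ ^ ε * (B.ncard : ℝ) ≤ (B'.ncard : ℝ) ∧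
    (covN δ (A + c • B') : ℝ) < δ ^ (-ε) * (A.ncard : ℝ)}

/-- k-fold sumset (sumN 0 A = {0}). -/
def sumN : ℕ → Set ℝ → Set ℝ
  | 0, _ => {0}
  | (n+1), A => sumN n A + A

lemma sumN_add_eq (m n : ℕ) (X : Set ℝ) :
    sumN (m + n) X = sumN m X + sumN n X := by
  induction n with
  | zero =>
    show sumN m X = sumN m X + ({0} : Set ℝ)
    rw [Set.singleton_zero, add_zero]
  | succ n ih =>
    show sumN (m + n) X + X = sumN m X + (sumN n X + X)
    rw [ih, add_assoc]

lemma sumN_finite {X : Set ℝ} (hX : X.Finite) (n : ℕ) : (sumN n X).Finite := by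
  induction n with
  | zero => exact Set.finite_singleton 0
  | succ n ih => exact ih.add hX

lemma sumN_nonempty {X : Set ℝ} (hX : X.Nonempty) (n : ℕ) : (sumN n X).Nonempty := by
  induction n with
  | zero => exact ⟨0, rfl⟩
  | succ n ih => exact ih.add hX

lemma sumN_mono {X Y : Set ℝ} (h : X ⊆ Y) (n : ℕ) : sumN n X ⊆ sumN n Y := by
  induction n with
  | zero => exact subset_rfl
  | succ n ih => exact Set.add_subset_add ih h

lemma ratio_aux (aa fa s2 s s' u : ℝ) (hfa : fa ≠ 0) (hs : s ≠ 0) (hs' : s' ≠ 0) :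
    2 * (aa / fa) * (s2 / s) * (s / s') * u = 2 * (aa * (s2 * u)) / (fa * s') := by
  field_simp

section aux

variable {δ : ℝ} (hδ : 0 < δ)

lemma mem_Ico_floor (x : ℝ) (hδ : 0 < δ) :
    x ∈ Set.Ico ((⌊x / δ⌋ : ℝ) * δ) (((⌊x / δ⌋ : ℝ) + 1) * δ) := by
  constructor
  · exact (le_div_iff₀ hδ).mp (Int.floor_le (x / δ))
  · exact (div_lt_iff₀ hδ).mp (by exact_mod_cast Int.lt_floor_add_one (x / δ))

lemma floor_div_eq (x : ℝ) (m : ℤ) (hδ : 0 < δ)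
    (h1 : (m : ℝ) * δ ≤ x) (h2 : x < ((m : ℝ) + 1) * δ) : ⌊x / δ⌋ = m := by
  have hl : (m : ℝ) ≤ x / δ := (le_div_iff₀ hδ).mpr h1
  have hr : x / δ < (m : ℝ) + 1 := (div_lt_iff₀ hδ).mpr h2
  exact Int.floor_eq_iff.mpr ⟨hl, by exact_mod_cast hr⟩

lemma cover_image (Y : Set ℝ) (hY : Y.Finite) (hδ : 0 < δ) :
    Y ⊆ ⋃ m ∈ hY.toFinset.image (fun x => ⌊x / δ⌋),
      Set.Ico ((m : ℝ) * δ) (((m : ℝ) + 1) * δ) := by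
  intro x hx
  simp only [Set.mem_iUnion, Finset.mem_image, Set.Finite.mem_toFinset, exists_prop]
  exact ⟨⌊x / δ⌋, ⟨x, hx, rfl⟩, mem_Ico_floor x hδ⟩

lemma covN_le_card_image (Y : Set ℝ) (hY : Y.Finite) (hδ : 0 < δ) :
    covN δ Y ≤ (hY.toFinset.image (fun x => ⌊x / δ⌋)).card :=
  Nat.sInf_le ⟨hY.toFinset.image (fun x => ⌊x / δ⌋), rfl, cover_image Y hY hδ⟩

lemma card_image_le_covN (Y : Set ℝ) (hY : Y.Finite) (hδ : 0 < δ) :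
    (hY.toFinset.image (fun x => ⌊x / δ⌋)).card ≤ covN δ Y := by
  have hne : {n : ℕ | ∃ s : Finset ℤ, s.card = n ∧
      Y ⊆ ⋃ k ∈ s, Set.Ico ((k : ℝ) * δ) (((k : ℝ) + 1) * δ)}.Nonempty :=
    ⟨_, hY.toFinset.image (fun x => ⌊x / δ⌋), rfl, cover_image Y hY hδ⟩
  obtain ⟨s, hscard, hscov⟩ := Nat.sInf_mem hne
  rw [covN, ← hscard]
  refine Finset.card_le_card ?_
  intro u hu
  obtain ⟨x, hx, rfl⟩ := Finset.mem_image.mp hu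
  have hx' : x ∈ Y := hY.mem_toFinset.mp hx
  have h2 := hscov hx'
  simp only [Set.mem_iUnion, exists_prop] at h2
  obtain ⟨m, hms, hIco⟩ := h2
  rw [floor_div_eq x m hδ hIco.1 hIco.2]
  exact hms

lemma floor_add_bounds (x y : ℝ) (hδ : 0 < δ) :
    ⌊x / δ⌋ + ⌊y / δ⌋ ≤ ⌊(x + y) / δ⌋ ∧ ⌊(x + y) / δ⌋ ≤ ⌊x / δ⌋ + ⌊y / δ⌋ + 1 := by
  constructor
  · rw [add_div]
    refine Int.le_floor.mpr ?_
    push_cast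
    exact add_le_add (Int.floor_le _) (Int.floor_le _)
  · have h : (x + y) / δ < ((⌊x / δ⌋ + ⌊y / δ⌋ + 2 : ℤ) : ℝ) := by
      rw [add_div]
      push_cast
      have h1 := Int.lt_floor_add_one (x / δ)
      have h2 := Int.lt_floor_add_one (y / δ)
      linarith
    have := Int.floor_lt.mpr h
    omega

/-- The key double-counting inequality. -/
lemma key_count (δ c : ℝ) (hδ : 0 < δ) (A S S' : Set ℝ)
    (hA : A.Finite) (hS : S.Finite) (hS' : S'.Finite) (hsub : S' ⊆ S) :
    covN δ (A + c • S) * (hA.toFinset.card * hS'.toFinset.card)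
      ≤ 2 * ((hA.add hA).toFinset.card
          * ((hS.add hS).toFinset.card * covN δ (A + c • S'))) := by
  classical
  have hXfin : (A + c • S).Finite := hA.add hS.smul_set
  have hX'fin : (A + c • S').Finite := hA.add hS'.smul_set
  have hSS'fin : (S + S').Finite := hS.add hS'
  set T : Finset ℤ := hXfin.toFinset.image (fun x => ⌊x / δ⌋) with hTdef
  set U : Finset ℤ := hX'fin.toFinset.image (fun x => ⌊x / δ⌋) with hUdef
  have hwit : ∀ n ∈ T, ∃ p : ℝ × ℝ, p.1 ∈ A ∧ p.2 ∈ S ∧ ⌊(p.1 + c * p.2) / δ⌋ = n := by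
    intro n hn
    obtain ⟨x, hx, rfl⟩ := Finset.mem_image.mp hn
    have hx' : x ∈ A + c • S := hXfin.mem_toFinset.mp hx
    rw [Set.mem_add] at hx'
    obtain ⟨a, ha, y, hy, rfl⟩ := hx'
    obtain ⟨s₀, hs₀, rfl⟩ := hy
    exact ⟨(a, s₀), ha, hs₀, by norm_num [smul_eq_mul]⟩
  choose! g hg1 hg2 hg3 using hwit
  have hcard : (T ×ˢ hA.toFinset ×ˢ hS'.toFinset).card
      ≤ ((hA.add hA).toFinset ×ˢ hSS'fin.toFinset ×ˢ U ×ˢ ({0, 1} : Finset ℤ)).card := by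
    refine Finset.card_le_card_of_injOn (fun p =>
      ((g p.1).1 + p.2.1, (g p.1).2 + p.2.2, ⌊(p.2.1 + c * p.2.2) / δ⌋,
        ⌊((((g p.1).1 + p.2.1) + c * ((g p.1).2 + p.2.2)) / δ)⌋ - p.1
          - ⌊(p.2.1 + c * p.2.2) / δ⌋)) ?_ ?_
    · rintro ⟨n, a, t⟩ hp
      simp only [Finset.mem_coe, Finset.mem_product] at hp
      obtain ⟨hn, ha, ht⟩ := hp
      have haA : a ∈ A := hA.mem_toFinset.mp ha
      have htS' : t ∈ S' := hS'.mem_toFinset.mp ht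
      simp only [Finset.mem_coe, Finset.mem_product]
      refine ⟨?_, ?_, ?_, ?_⟩
      · exact (hA.add hA).mem_toFinset.mpr (Set.add_mem_add (hg1 n hn) haA)
      · exact hSS'fin.mem_toFinset.mpr (Set.add_mem_add (hg2 n hn) htS')
      · refine Finset.mem_image.mpr ⟨a + c * t, ?_, rfl⟩
        refine hX'fin.mem_toFinset.mpr (Set.add_mem_add haA ?_)
        rw [← smul_eq_mul]
        exact Set.smul_mem_smul_set htS'
      · have harg : ((g n).1 + a) + c * ((g n).2 + t)
            = ((g n).1 + c * (g n).2) + (a + c * t) := by ring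
        rw [harg]
        obtain ⟨hb1, hb2⟩ := floor_add_bounds ((g n).1 + c * (g n).2) (a + c * t) hδ
        have hnval := hg3 n hn
        simp only [Finset.mem_insert, Finset.mem_singleton]
        omega
    · rintro ⟨n₁, a₁, t₁⟩ - ⟨n₂, a₂, t₂⟩ - h
      simp only [Prod.mk.injEq] at h
      obtain ⟨h1, h2, h3, h4⟩ := h
      have hkey : ((g n₁).1 + a₁) + c * ((g n₁).2 + t₁)
          = ((g n₂).1 + a₂) + c * ((g n₂).2 + t₂) := by rw [h1, h2]
      rw [hkey, h3] at h4
      have hn : n₁ = n₂ := by omega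
      subst hn
      have ha : a₁ = a₂ := by linarith
      have ht : t₁ = t₂ := by linarith
      simp [ha, ht]
  simp only [Finset.card_product] at hcard
  have hU2 : ({0, 1} : Finset ℤ).card = 2 := rfl
  rw [hU2] at hcard
  have hSS'sub : hSS'fin.toFinset.card ≤ (hS.add hS).toFinset.card :=
    Finset.card_le_card (Set.Finite.toFinset_mono (Set.add_subset_add_left hsub))
  have hTle : covN δ (A + c • S) ≤ T.card := covN_le_card_image _ hXfin hδ
  have hUge : U.card ≤ covN δ (A + c • S') := card_image_le_covN _ hX'fin hδ
  calc covN δ (A + c • S) * (hA.toFinset.card * hS'.toFinset.card)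
      ≤ T.card * (hA.toFinset.card * hS'.toFinset.card) := Nat.mul_le_mul_right _ hTle
    _ ≤ (hA.add hA).toFinset.card * (hSS'fin.toFinset.card * (U.card * 2)) := hcard
    _ ≤ (hA.add hA).toFinset.card
        * ((hS.add hS).toFinset.card * (covN δ (A + c • S') * 2)) := by gcongr
    _ = 2 * ((hA.add hA).toFinset.card
        * ((hS.add hS).toFinset.card * covN δ (A + c • S'))) := by ring


/-- Covering-number inequality relating |A + c·2^k B|_δ to |A + c·2^k B'|_δ via
doubling ratios (the main chain of inequalities behind (2.24) in the paper). -/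
theorem stmt16 :
    ∃ C : ℝ, 0 < C ∧
    ∀ δ : ℝ, isDyadic δ →
    ∀ A B B' : Set ℝ, A.Finite → B.Finite → A.Nonempty → B.Nonempty →
    B' ⊆ B → B'.Nonempty →
    A ⊆ gridZ δ → B ⊆ gridZ δ →
    ∀ c : ℝ, ∀ k : ℕ,
    (covN δ (A + c • sumN (2 ^ k) B) : ℝ) ≤
      C * (((A + A).ncard : ℝ) / (A.ncard : ℝ))
        * (((sumN (2 ^ (k + 1)) B).ncard : ℝ) / ((sumN (2 ^ k) B).ncard : ℝ))
        * (((sumN (2 ^ k) B).ncard : ℝ) / ((sumN (2 ^ k) B').ncard : ℝ))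
        * (covN δ (A + c • sumN (2 ^ k) B') : ℝ) := by
  refine ⟨2, by norm_num, ?_⟩
  intro δ hδd A B B' hAfin hBfin hAne hBne hB'B hB'ne _ _ c k
  obtain ⟨j, hj⟩ := hδd
  have hδ : (0:ℝ) < δ := by rw [hj]; positivity
  set S : Set ℝ := sumN (2 ^ k) B with hSdef
  set S' : Set ℝ := sumN (2 ^ k) B' with hS'def
  set S2 : Set ℝ := sumN (2 ^ (k + 1)) B with hS2def
  have hS2eq : S2 = S + S := by
    rw [hS2def, hSdef, show 2 ^ (k+1) = 2 ^ k + 2 ^ k by rw [pow_succ, Nat.mul_two],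
      sumN_add_eq]
  have hSfin : S.Finite := sumN_finite hBfin _
  have hS'fin : S'.Finite := sumN_finite (hBfin.subset hB'B) _
  have hSne : S.Nonempty := sumN_nonempty hBne _
  have hS'ne : S'.Nonempty := sumN_nonempty hB'ne _
  have hS'S : S' ⊆ S := sumN_mono hB'B _
  have hkey := key_count δ c hδ A S S' hAfin hSfin hS'fin hS'S
  rw [← Set.ncard_eq_toFinset_card _ hAfin, ← Set.ncard_eq_toFinset_card _ hS'fin,
    ← Set.ncard_eq_toFinset_card _ (hAfin.add hAfin),
    ← Set.ncard_eq_toFinset_card _ (hSfin.add hSfin)] at hkey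
  rw [← hS2eq] at hkey
  have haN : (0:ℝ) < (A.ncard : ℝ) := by
    exact_mod_cast (Set.ncard_pos hAfin).mpr hAne
  have hsN : (0:ℝ) < (S.ncard : ℝ) := by
    exact_mod_cast (Set.ncard_pos hSfin).mpr hSne
  have hs'N : (0:ℝ) < (S'.ncard : ℝ) := by
    exact_mod_cast (Set.ncard_pos hS'fin).mpr hS'ne
  rw [ratio_aux _ _ _ _ _ _ haN.ne' hsN.ne' hs'N.ne', le_div_iff₀ (mul_pos haN hs'N)]
  exact_mod_cast hkey
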